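/- Let (X, Y) be supplementary difference sets over Z_v with parameters (v; r, s; λ) such that v = 2n + 1 where n = r + s − λ. Then the associated circulant matrices satisfy C_X C_X^T + C_Y C_Y^T = (2v − 2)·I_v + 2·J_v, where I_v is the identity matrix of order v and J_v is the v×v matrix with all entries equal to 1. -/

import Mathlib

open Finset Matrix

/-- The number of ordered pairs `(a, b)` with `a, b ∈ X` and `a − b = c` in `ZMod v`. -/
def diffCount (v : ℕ) (X : Finset (ZMod v)) (c : ZMod v) : ℕ :=
  ((X ×ˢ X).filter (fun p => p.1 - p.2 = c)).card

/-- The circulant ±1 matrix associated to `X ⊆ ZMod v`: its `(j,k)` entry is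
`−1` if `k − j ∈ X` and `+1` otherwise. -/
def circ (v : ℕ) (X : Finset (ZMod v)) : Matrix (ZMod v) (ZMod v) ℤ :=
  fun j k => if k - j ∈ X then -1 else 1

lemma diffCount_zero (v : ℕ) (X : Finset (ZMod v)) : diffCount v X 0 = X.card := by
  unfold diffCount
  refine Finset.card_bij (fun p _ => p.1) ?_ ?_ ?_
  · intro p hp
    simp only [mem_filter, mem_product] at hp
    exact hp.1.1
  · intro p hp q hq h
    simp only [mem_filter, mem_product, sub_eq_zero] at hp hq
    exact Prod.ext h (by rw [← hp.2, ← hq.2, h])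
  · intro a ha
    exact ⟨(a, a), by simp [ha], rfl⟩

lemma shift_sum (v : ℕ) [NeZero v] (X : Finset (ZMod v)) (t : ZMod v) :
    ∑ i : ZMod v, (if i - t ∈ X then (1:ℤ) else 0) = X.card := by
  have h := Fintype.sum_equiv (Equiv.subRight t) (fun i => if i - t ∈ X then (1:ℤ) else 0)
    (fun x => if x ∈ X then (1:ℤ) else 0) (fun i => rfl)
  exact h.trans (by simp [Finset.sum_ite_mem])

lemma joint_sum (v : ℕ) [NeZero v] (X : Finset (ZMod v)) (j k : ZMod v) :
    ∑ i : ZMod v, (if i - j ∈ X then (1:ℤ) else 0) * (if i - k ∈ X then (1:ℤ) else 0)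
      = diffCount v X (k - j) := by
  have h : ∀ i : ZMod v, (if i - j ∈ X then (1:ℤ) else 0) * (if i - k ∈ X then (1:ℤ) else 0)
      = if i - j ∈ X ∧ i - k ∈ X then (1:ℤ) else 0 := by
    intro i; by_cases h1 : i - j ∈ X <;> by_cases h2 : i - k ∈ X <;> simp [h1, h2]
  simp only [h, Finset.sum_boole]
  norm_cast
  unfold diffCount
  refine Finset.card_bij (fun i _ => (i - j, i - k)) ?_ ?_ ?_
  · intro i hi
    simp only [mem_filter, mem_univ, true_and] at hi
    simp only [mem_filter, mem_product]
    exact ⟨⟨hi.1, hi.2⟩, by ring⟩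
  · intro a ha b hb h
    have := congrArg Prod.fst h
    simpa [sub_left_inj] using this
  · intro p hp
    simp only [mem_filter, mem_product] at hp
    have h2 : p.1 + j - k = p.2 := by linear_combination hp.2
    refine ⟨p.1 + j, ?_, ?_⟩
    · simp only [mem_filter, mem_univ, true_and, add_sub_cancel_right]
      exact ⟨hp.1.1, h2 ▸ hp.1.2⟩
    · rw [h2]
      simp [Prod.ext_iff]

lemma key (v : ℕ) [NeZero v] (X : Finset (ZMod v)) (j k : ZMod v) :
    ∑ i : ZMod v, circ v X j i * circ v X k i =
      (v : ℤ) - 4 * X.card + 4 * diffCount v X (k - j) := by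
  have hexp : ∀ i : ZMod v, circ v X j i * circ v X k i =
      1 - 2 * (if i - j ∈ X then (1:ℤ) else 0) - 2 * (if i - k ∈ X then (1:ℤ) else 0)
        + 4 * ((if i - j ∈ X then (1:ℤ) else 0) * (if i - k ∈ X then (1:ℤ) else 0)) := by
    intro i; unfold circ; split_ifs <;> ring
  simp only [hexp]
  rw [Finset.sum_add_distrib, Finset.sum_sub_distrib, Finset.sum_sub_distrib,
    ← Finset.mul_sum, ← Finset.mul_sum, ← Finset.mul_sum, shift_sum, shift_sum, joint_sum]
  simp [Finset.card_univ, ZMod.card]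
  ring

theorem doptimal_sds_matrix_identity (v : ℕ) [NeZero v] (r s lam : ℕ)
    (X Y : Finset (ZMod v))
    (hX : X.card = r) (hY : Y.card = s)
    (hsds : ∀ c : ZMod v, c ≠ 0 → diffCount v X c + diffCount v Y c = lam)
    (hv : v + 2 * lam = 2 * (r + s) + 1) :
    circ v X * (circ v X)ᵀ + circ v Y * (circ v Y)ᵀ =
      (2 * (v : ℤ) - 2) • (1 : Matrix (ZMod v) (ZMod v) ℤ) +
      (2 : ℤ) • (Matrix.of fun _ _ => (1 : ℤ) : Matrix (ZMod v) (ZMod v) ℤ) := by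
  ext j k
  simp only [Matrix.add_apply, Matrix.mul_apply, Matrix.transpose_apply, Matrix.smul_apply,
    Matrix.one_apply, Matrix.of_apply, smul_eq_mul]
  rw [key v X j k, key v Y j k, hX, hY]
  by_cases hjk : j = k
  · subst hjk
    simp [diffCount_zero, hX, hY]
    ring
  · have hne : k - j ≠ 0 := sub_ne_zero.mpr (Ne.symm hjk)
    have h := hsds (k - j) hne
    have h' : (diffCount v X (k - j) : ℤ) + diffCount v Y (k - j) = lam := by exact_mod_cast h
    have hv' : (v : ℤ) + 2 * lam = 2 * (r + s) + 1 := by exact_mod_cast hv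
    simp [hjk]
    push_cast at h' hv' ⊢
    linarith
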